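/- Let U_H be a finite-dimensional subspace of U and suppose that for every nonzero w_H ∈ U_H there exists v_h ∈ V_h with b(w_H, v_h) ≠ 0. Then for every f ∈ V' there exists a unique u_H ∈ U_H such that b(u_H, v) = f(v) for all v in the near-optimal test space V^n.opt(U_H, V_h) = P(T(U_H)); i.e., the DPG discrete problem with near-optimal test space is uniquely solvable. -/

import Mathlib

open scoped RealInnerProductSpace

/-- If `U_H` is a finite-dimensional subspace of `U` and for every nonzero
`w_H ∈ U_H` there is `v_h ∈ V_h` with `b(w_H, v_h) ≠ 0`, then for every `f ∈ V'` there
is a unique `u_H ∈ U_H` with `b(u_H, v) = f(v)` for all `v` in the near-optimal test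
space `V^n.opt(U_H, V_h) = P(T(U_H))`. -/
theorem stmt_9
    {U V : Type*} [NormedAddCommGroup U] [NormedSpace ℝ U]
    [NormedAddCommGroup V] [InnerProductSpace ℝ V]
    (B : U →L[ℝ] (V →L[ℝ] ℝ))
    (T : U → V) (hT : ∀ (w : U) (v : V), ⟪T w, v⟫ = B w v)
    (V_h : Submodule ℝ V) [V_h.HasOrthogonalProjection]
    (U_H : Submodule ℝ U) [FiniteDimensional ℝ U_H]
    (hnondeg : ∀ w_H ∈ U_H, w_H ≠ 0 → ∃ v_h ∈ V_h, B w_H v_h ≠ 0)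
    (f : V →L[ℝ] ℝ) :
    ∃! u_H : U_H,
      ∀ v ∈ (fun w => (V_h.orthogonalProjectionOnto (T w) : V)) '' (U_H : Set U),
        B (u_H : U) v = f v := by
  -- T is linear (determined by hT)
  have Tadd : ∀ w w' : U, T (w + w') = T w + T w' := by
    intro w w'
    apply ext_inner_right ℝ
    intro v
    rw [inner_add_left, hT, hT, hT, map_add]
    rfl
  have Tsmul : ∀ (c : ℝ) (w : U), T (c • w) = c • T w := by
    intro c w
    apply ext_inner_right ℝ
    intro v
    rw [inner_smul_left, hT, hT, map_smul]
    simp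
  -- The map S : U_H → V, w ↦ P(T w)
  let S : U_H →ₗ[ℝ] V :=
    { toFun := fun w => (V_h.orthogonalProjectionOnto (T (w : U)) : V)
      map_add' := by intro w w'; simp [Tadd]
      map_smul' := by intro c w; simp [Tsmul] }
  have hSmem : ∀ w : U_H, S w ∈ V_h := fun w => (V_h.orthogonalProjectionOnto _).2
  -- key: ⟪T w, v⟫ = ⟪S w, v⟫ for v ∈ V_h
  have hproj : ∀ (w : U_H) (v : V), v ∈ V_h → ⟪T (w : U), v⟫ = ⟪S w, v⟫ := by
    intro w v hv
    have h0 := V_h.starProjection_inner_eq_zero (T (w : U)) v hv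
    rw [inner_sub_left, sub_eq_zero] at h0
    exact h0
  have Sinj : Function.Injective S := by
    rw [← LinearMap.ker_eq_bot, LinearMap.ker_eq_bot']
    intro w hw
    by_contra hne
    have hw0 : (w : U) ≠ 0 := fun h => hne (Subtype.ext h)
    obtain ⟨v_h, hvh, hBne⟩ := hnondeg (w : U) w.2 hw0
    apply hBne
    rw [← hT, hproj w v_h hvh, hw, inner_zero_left]
  -- Gram map Φ : U_H → Dual, Φ u w = ⟪S u, S w⟫
  let Φ : U_H →ₗ[ℝ] Module.Dual ℝ U_H :=
    { toFun := fun u =>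
        { toFun := fun w => ⟪S u, S w⟫
          map_add' := by intro w w'; simp [inner_add_right]
          map_smul' := by intro c w; simp [inner_smul_right] }
      map_add' := by intro u u'; ext w; simp [inner_add_left]
      map_smul' := by intro c u; ext w; simp [inner_smul_left] }
  have Φinj : Function.Injective Φ := by
    rw [← LinearMap.ker_eq_bot, LinearMap.ker_eq_bot']
    intro u hu
    have h0 : ⟪S u, S u⟫ = (0 : ℝ) := LinearMap.congr_fun hu u
    have : S u = 0 := by
      rwa [inner_self_eq_zero] at h0
    exact Sinj (by rw [this, map_zero])
  have Φsurj : Function.Surjective Φ :=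
    (LinearMap.injective_iff_surjective_of_finrank_eq_finrank
      Subspace.dual_finrank_eq.symm).mp Φinj
  -- the functional ℓ w = f (S w)
  let ℓ : Module.Dual ℝ U_H :=
    { toFun := fun w => f (S w)
      map_add' := by intro w w'; simp
      map_smul' := by intro c w; simp }
  obtain ⟨u, hu⟩ := Φsurj ℓ
  have key : ∀ w : U_H, ⟪S u, S w⟫ = f (S w) := fun w =>
    LinearMap.congr_fun hu w
  refine ⟨u, ?_, ?_⟩
  · rintro v ⟨w, hw, rfl⟩
    show B (u : U) (S ⟨w, hw⟩) = f (S ⟨w, hw⟩)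
    rw [← hT, hproj u _ (hSmem ⟨w, hw⟩)]
    exact key ⟨w, hw⟩
  · intro u' hu'
    apply Φinj
    ext w
    have h1 : B (u' : U) (S w) = f (S w) := hu' (S w) ⟨(w : U), w.2, rfl⟩
    have h2 : ⟪S u', S w⟫ = f (S w) := by
      rw [← h1, ← hT, hproj u' _ (hSmem w)]
    show ⟪S u', S w⟫ = ⟪S u, S w⟫
    rw [h2, key w]
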